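/- At the equilibrium strategy pair (a*, d*) of the Attacker-Defender game with equal endowments R, the sum of expected conflict investments equals the upper bound: E(a*) + E(d*) = l*. -/

import Mathlib

/-- The `n`-th harmonic number `H_n = 1 + 1/2 + ... + 1/n` (with `H_0 = 0`). -/
noncomputable def H (n : ℕ) : ℝ := ∑ k ∈ Finset.Icc 1 n, (1 : ℝ) / k

/-- `l` is the upper bound `l*` for endowment `R`:
the unique `1 ≤ l ≤ R - 1` with `H_R - H_{R-l} < 1 < H_R - H_{R-l-1}`. -/
def IsUpperBound (R l : ℕ) : Prop :=
  1 ≤ l ∧ l ≤ R - 1 ∧ H R - H (R - l) < 1 ∧ 1 < H R - H (R - l - 1)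

/-- Attacker's equilibrium mixed strategy (defender endowment `R`, upper bound `l`). -/
noncomputable def astar (R l : ℕ) : ℕ → ℝ := fun i =>
  if i = 0 then ((R : ℝ) - l) / R
  else if i ≤ l then ((R : ℝ) - l) / (((R : ℝ) - i + 1) * ((R : ℝ) - i))
  else 0

/-- Defender's equilibrium mixed strategy (defender endowment `R`, upper bound `l`). -/
noncomputable def dstar (R l : ℕ) : ℕ → ℝ := fun j =>
  if j < l then 1 / ((R : ℝ) - j)
  else if j = l then 1 - ∑ k ∈ Finset.range l, 1 / ((R : ℝ) - k)
  else 0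

/-- Expected conflict investment of a mixed strategy on `{0, ..., R}`. -/
noncomputable def Einv (R : ℕ) (s : ℕ → ℝ) : ℝ := ∑ i ∈ Finset.range (R + 1), (i : ℝ) * s i

lemma lemA (R : ℕ) : ∀ l : ℕ, l < R →
    ∑ i ∈ Finset.Icc 1 l, (i : ℝ) / (((R : ℝ) - i + 1) * ((R : ℝ) - i))
      = (l : ℝ) / ((R : ℝ) - l) - ∑ k ∈ Finset.range l, 1 / ((R : ℝ) - k) := by
  intro l
  induction l with
  | zero => simp
  | succ n ih =>
    intro h
    have hn : n < R := by omega
    have h1 : ((R : ℝ) - n) ≠ 0 := by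
      have : (n : ℝ) < R := by exact_mod_cast hn
      linarith
    have h2 : ((R : ℝ) - ((n : ℝ) + 1)) ≠ 0 := by
      have : ((n : ℝ) + 1) < R := by exact_mod_cast h
      linarith
    have key : (n : ℝ) / ((R : ℝ) - n)
        + ((n : ℝ) + 1) / (((R : ℝ) - ((n : ℝ) + 1) + 1) * ((R : ℝ) - ((n : ℝ) + 1)))
        = ((n : ℝ) + 1) / ((R : ℝ) - ((n : ℝ) + 1)) - 1 / ((R : ℝ) - n) := by
      have h1' : ((R : ℝ) - ((n : ℝ) + 1) + 1) ≠ 0 := by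
        intro hc; apply h1; linarith
      field_simp
      ring
    rw [Finset.sum_Icc_succ_top (by omega : 1 ≤ n + 1), ih hn, Finset.sum_range_succ]
    push_cast
    linarith [key]

theorem sum_expected_investments (R l : ℕ) (hR : 2 ≤ R) (hl : IsUpperBound R l) :
    Einv R (astar R l) + Einv R (dstar R l) = (l : ℝ) := by
  obtain ⟨hl1, hl2, _, _⟩ := hl
  have hlR : l < R := by omega
  have hRl : ((R : ℝ) - l) ≠ 0 := by
    have : (l : ℝ) < R := by exact_mod_cast hlR
    linarith
  set S : ℝ := ∑ k ∈ Finset.range l, 1 / ((R : ℝ) - k) with hS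
  have ha : Einv R (astar R l)
      = ((R : ℝ) - l) * ∑ i ∈ Finset.Icc 1 l, (i : ℝ) / (((R : ℝ) - i + 1) * ((R : ℝ) - i)) := by
    unfold Einv astar
    rw [Finset.mul_sum]
    rw [← Finset.sum_subset (by intro x hx; simp only [Finset.mem_Icc, Finset.mem_range] at *; omega :
      Finset.Icc 1 l ⊆ Finset.range (R + 1))]
    · apply Finset.sum_congr rfl
      intro i hi
      simp only [Finset.mem_Icc] at hi
      have hi0 : i ≠ 0 := by omega
      rw [if_neg hi0, if_pos hi.2]
      field_simp
    · intro i hi hni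
      simp only [Finset.mem_Icc, not_and_or, not_le] at hni
      rcases hni with h0 | hgt
      · have : i = 0 := by omega
        simp [this]
      · rw [if_neg (by omega : i ≠ 0), if_neg (by omega : ¬ i ≤ l), mul_zero]
  have hd : Einv R (dstar R l)
      = (∑ j ∈ Finset.range l, (j : ℝ) / ((R : ℝ) - j)) + (l : ℝ) * (1 - S) := by
    unfold Einv dstar
    rw [← Finset.sum_subset (Finset.range_subset_range.mpr (by omega : l + 1 ≤ R + 1))]
    · rw [Finset.sum_range_succ]
      congr 1
      · apply Finset.sum_congr rfl
        intro j hj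
        simp only [Finset.mem_range] at hj
        rw [if_pos hj]
        field_simp
      · rw [if_neg (lt_irrefl l), if_pos rfl]
    · intro j _ hj
      simp only [Finset.mem_range, not_lt] at hj
      rw [if_neg (by omega : ¬ j < l), if_neg (by omega : j ≠ l), mul_zero]
  have hb : (∑ j ∈ Finset.range l, (j : ℝ) / ((R : ℝ) - j)) = (R : ℝ) * S - l := by
    have hcongr : ∀ j ∈ Finset.range l, (j : ℝ) / ((R : ℝ) - j)
        = (R : ℝ) * (1 / ((R : ℝ) - j)) - 1 := by
      intro j hj
      simp only [Finset.mem_range] at hj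
      have hj' : ((R : ℝ) - j) ≠ 0 := by
        have : (j : ℝ) < R := by exact_mod_cast (by omega : j < R)
        linarith
      field_simp
      ring
    rw [Finset.sum_congr rfl hcongr, Finset.sum_sub_distrib, Finset.sum_const,
      ← Finset.mul_sum, ← hS]
    simp [nsmul_eq_mul]
  rw [ha, lemA R l hlR, hd, hb, ← hS]
  field_simp
  ring
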